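/- arXiv:2404.00771 — 6 statements merged into one kernel-verified Lean document; each statement's English description precedes it below -/
import Mathlib

section
/- Let G be a connected graph and let T be the set of all twin vertices of G. Then the fault-tolerant metric dimension of G satisfies dim'(G) ≥ |T|. -/
open SimpleGraph

variable {V : Type*}

/-- `X` is a metric generator of `G`: every pair of distinct vertices is resolved
by some vertex of `X`. -/
def isMetricGen (G : SimpleGraph V) (X : Set V) : Prop :=
  ∀ x y : V, x ≠ y → ∃ u ∈ X, G.dist x u ≠ G.dist y u

/-- `F` is a fault-tolerant metric generator: `F` is a metric generator and remains
one after removing any single vertex of `F`. -/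
def isFTMetricGen (G : SimpleGraph V) (F : Set V) : Prop :=
  isMetricGen G F ∧ ∀ u ∈ F, isMetricGen G (F \ {u})

/-- The metric dimension: minimum cardinality of a (finite) metric generator. -/
noncomputable def metricDim (G : SimpleGraph V) : ℕ :=
  sInf {n : ℕ | ∃ X : Set V, X.Finite ∧ isMetricGen G X ∧ X.ncard = n}

/-- The fault-tolerant metric dimension. -/
noncomputable def ftMetricDim (G : SimpleGraph V) : ℕ :=
  sInf {n : ℕ | ∃ F : Set V, F.Finite ∧ isFTMetricGen G F ∧ F.ncard = n}

/-- Distance from a vertex `w` to an (unordered) edge `e = xy`: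
`d(w,e) = min (d(w,x)) (d(w,y))`. -/
noncomputable def edgeDist (G : SimpleGraph V) (w : V) (e : Sym2 V) : ℕ :=
  Sym2.lift ⟨fun x y => min (G.dist w x) (G.dist w y), fun _ _ => min_comm _ _⟩ e

/-- `S` is an edge metric generator of `G`: every pair of distinct edges is
resolved by some vertex of `S`. -/
def isEdgeMetricGen (G : SimpleGraph V) (S : Set V) : Prop :=
  ∀ e ∈ G.edgeSet, ∀ f ∈ G.edgeSet, e ≠ f → ∃ w ∈ S, edgeDist G w e ≠ edgeDist G w f

/-- `F` is a fault-tolerant edge metric generator. -/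
def isFTEdgeMetricGen (G : SimpleGraph V) (F : Set V) : Prop :=
  isEdgeMetricGen G F ∧ ∀ u ∈ F, isEdgeMetricGen G (F \ {u})

/-- The edge metric dimension. -/
noncomputable def edgeMetricDim (G : SimpleGraph V) : ℕ :=
  sInf {n : ℕ | ∃ S : Set V, S.Finite ∧ isEdgeMetricGen G S ∧ S.ncard = n}

/-- The fault-tolerant edge metric dimension. -/
noncomputable def ftEdgeMetricDim (G : SimpleGraph V) : ℕ :=
  sInf {n : ℕ | ∃ F : Set V, F.Finite ∧ isFTEdgeMetricGen G F ∧ F.ncard = n}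

/-- An edge metric basis: an edge metric generator of minimum cardinality. -/
def isEdgeMetricBasis (G : SimpleGraph V) (S : Set V) : Prop :=
  isEdgeMetricGen G S ∧ ∀ S' : Set V, isEdgeMetricGen G S' → S.ncard ≤ S'.ncard

/-- `u` and `v` are (distinct) twins: `N(u) = N(v)` or `N[u] = N[v]`. -/
def isTwinPair (G : SimpleGraph V) (u v : V) : Prop :=
  u ≠ v ∧ (G.neighborSet u = G.neighborSet v ∨
    insert u (G.neighborSet u) = insert v (G.neighborSet v))

/-- `u` is a twin vertex: it has a twin distinct from itself. -/
def isTwinVertex (G : SimpleGraph V) (u : V) : Prop :=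
  ∃ v, isTwinPair G u v

/-- A twin set: a maximal set of vertices in which every two vertices are twins. -/
def isTwinSet (G : SimpleGraph V) (T : Set V) : Prop :=
  (∀ u ∈ T, ∀ v ∈ T, u ≠ v → isTwinPair G u v) ∧
  ∀ T' : Set V, T ⊆ T' → (∀ u ∈ T', ∀ v ∈ T', u ≠ v → isTwinPair G u v) → T' = T

/-- Adjacency of the generalized Sierpiński graph `S_G^r` over a base graph `G`
on `[n]`.  A vertex is a string `x = x_{r-1} … x_0` (index `r-1` is the leftmost,
most significant coordinate). -/
def sierpinskiAdj {n : ℕ} (G : SimpleGraph (Fin n)) (r : ℕ) (x y : Fin r → Fin n) : Prop :=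
  ∃ t : Fin r, (∀ i : Fin r, t < i → x i = y i) ∧
    (x t ≠ y t ∧ G.Adj (x t) (y t)) ∧
    ∀ i : Fin r, i < t → x i = y t ∧ y i = x t

/-- The generalized Sierpiński graph `S_G^r`. -/
def sierpinski {n : ℕ} (G : SimpleGraph (Fin n)) (r : ℕ) :
    SimpleGraph (Fin r → Fin n) where
  Adj := sierpinskiAdj G r
  symm := by
    constructor
    rintro x y ⟨t, h1, ⟨hne, hadj⟩, h3⟩
    exact ⟨t, fun i hi => (h1 i hi).symm, ⟨hne.symm, hadj.symm⟩,
      fun i hi => ⟨(h3 i hi).2, (h3 i hi).1⟩⟩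
  loopless := by
    constructor
    rintro x ⟨t, _, ⟨hne, _⟩, _⟩
    exact hne rfl

/-- The 4-cycle on `{0,1,2,3}` with edges `01, 12, 23, 30`. -/
def C4 : SimpleGraph (Fin 4) := SimpleGraph.fromRel (fun x y => y = x + 1)

/-- The hypercube `Q_d`: binary strings of length `d`, adjacent iff they differ
in exactly one coordinate. -/
def hypercube (d : ℕ) : SimpleGraph (Fin d → Fin 2) where
  Adj x y := ∃! i, x i ≠ y i
  symm := by
    constructor
    rintro x y ⟨i, hi, hu⟩
    exact ⟨i, hi.symm, fun j hj => hu j hj.symm⟩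
  loopless := by
    constructor
    rintro x ⟨i, hi, _⟩
    exact hi rfl

lemma isTwinPair.symm' {V : Type*} {G : SimpleGraph V} {u v : V}
    (h : isTwinPair G u v) : isTwinPair G v u :=
  ⟨h.1.symm, h.2.elim (fun h => Or.inl h.symm) (fun h => Or.inr h.symm)⟩

lemma twin_dist_le {V : Type*} {G : SimpleGraph V} (hconn : G.Connected) {u v : V}
    (h : isTwinPair G u v) {x : V} (hxu : x ≠ u) : G.dist x v ≤ G.dist x u := by
  obtain ⟨huv, htw⟩ := h
  obtain ⟨p, hp⟩ := hconn.exists_walk_length_eq_dist u x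
  rw [SimpleGraph.dist_comm (u := x) (v := v), SimpleGraph.dist_comm (u := x) (v := u), ← hp]
  cases p with
  | nil => exact absurd rfl hxu
  | @cons _ b _ hadj q =>
    cases htw with
    | inl hN =>
      have hvb : G.Adj v b := by
        have : b ∈ G.neighborSet v := hN ▸ hadj
        exact this
      exact SimpleGraph.dist_le (SimpleGraph.Walk.cons hvb q)
    | inr hN =>
      have hb : b ∈ insert v (G.neighborSet v) := by
        rw [← hN]; exact Set.mem_insert_of_mem _ hadj
      rcases hb with rfl | hb
      · exact le_trans (SimpleGraph.dist_le q) (Nat.le_succ _)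
      · exact SimpleGraph.dist_le (SimpleGraph.Walk.cons hb q)

lemma twin_dist_eq {V : Type*} {G : SimpleGraph V} (hconn : G.Connected) {u v : V}
    (h : isTwinPair G u v) {x : V} (hxu : x ≠ u) (hxv : x ≠ v) :
    G.dist x u = G.dist x v :=
  le_antisymm (twin_dist_le hconn h.symm' hxv) (twin_dist_le hconn h hxu)

/-- If `T` is the set of all twin vertices of a connected graph `G`,
then the fault-tolerant metric dimension satisfies `dim'(G) ≥ |T|`. -/
theorem ftMetricDim_ge_twins {V : Type*} [Fintype V]
    (G : SimpleGraph V) (hconn : G.Connected)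
    (T : Set V) (hT : T = {u : V | isTwinVertex G u}) :
    T.ncard ≤ ftMetricDim G := by
  classical
  have huniv : isFTMetricGen G (Set.univ : Set V) := by
    constructor
    · intro x y hxy
      refine ⟨x, Set.mem_univ x, ?_⟩
      rw [SimpleGraph.dist_self]
      exact (hconn.pos_dist_of_ne (Ne.symm hxy)).ne
    · intro u _ x y hxy
      by_cases hx : x = u
      · subst hx
        refine ⟨y, ⟨Set.mem_univ y, Ne.symm hxy⟩, ?_⟩
        rw [SimpleGraph.dist_self]
        exact (hconn.pos_dist_of_ne hxy).ne'
      · refine ⟨x, ⟨Set.mem_univ x, hx⟩, ?_⟩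
        rw [SimpleGraph.dist_self]
        exact (hconn.pos_dist_of_ne (Ne.symm hxy)).ne
  have hne : {n : ℕ | ∃ F : Set V, F.Finite ∧ isFTMetricGen G F ∧ F.ncard = n}.Nonempty :=
    ⟨(Set.univ : Set V).ncard, Set.univ, Set.finite_univ, huniv, rfl⟩
  obtain ⟨F, hFfin, hFT, hFcard⟩ := Nat.sInf_mem hne
  have hsub : T ⊆ F := by
    rw [hT]
    intro u hu
    obtain ⟨v, hpair⟩ := hu
    by_contra huF
    have huv : u ≠ v := hpair.1
    by_cases hvF : v ∈ F
    · obtain ⟨w, hwF, hw⟩ := hFT.2 v hvF u v huv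
      have hwu : w ≠ u := fun h => huF (h ▸ hwF.1)
      have hwv : w ≠ v := hwF.2
      exact hw (by
        rw [SimpleGraph.dist_comm (u := u) (v := w), SimpleGraph.dist_comm (u := v) (v := w)]
        exact twin_dist_eq hconn hpair hwu hwv)
    · obtain ⟨w, hwF, hw⟩ := hFT.1 u v huv
      have hwu : w ≠ u := fun h => huF (h ▸ hwF)
      have hwv : w ≠ v := fun h => hvF (h ▸ hwF)
      exact hw (by
        rw [SimpleGraph.dist_comm (u := u) (v := w), SimpleGraph.dist_comm (u := v) (v := w)]
        exact twin_dist_eq hconn hpair hwu hwv)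
  calc T.ncard ≤ F.ncard := Set.ncard_le_ncard hsub hFfin
    _ = ftMetricDim G := hFcard
end

section
/- Let G be a connected graph whose set of twin vertices partitions into twin sets all of cardinality 2. If dim(G) = k, where k is the number of twin sets, then dim'(G) = 2k. -/
open SimpleGraph

variable {V : Type*}

open scoped Classical

lemma twin_adj {G : SimpleGraph V} {u v : V} (h : isTwinPair G u v) {w : V}
    (hwu : w ≠ u) (hwv : w ≠ v) : G.Adj u w ↔ G.Adj v w := by
  obtain ⟨huv, ho | hc⟩ := h
  · rw [← SimpleGraph.mem_neighborSet, ← SimpleGraph.mem_neighborSet, ho]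
  · have h1 : w ∈ insert u (G.neighborSet u) ↔ w ∈ insert v (G.neighborSet v) := by rw [hc]
    simp only [Set.mem_insert_iff, SimpleGraph.mem_neighborSet, hwu, hwv, false_or] at h1
    exact h1

lemma swap_adj_mpr {G : SimpleGraph V} {u v : V} (h : isTwinPair G u v) :
    ∀ x y : V, G.Adj x y → G.Adj (Equiv.swap u v x) (Equiv.swap u v y) := by
  have key : ∀ y : V, G.Adj u y → G.Adj v (Equiv.swap u v y) := by
    intro y ha
    rcases eq_or_ne y u with rfl | hyu
    · exact absurd ha (G.loopless.irrefl y)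
    rcases eq_or_ne y v with rfl | hyv
    · rw [Equiv.swap_apply_right]; exact ha.symm
    · rw [Equiv.swap_apply_of_ne_of_ne hyu hyv]
      exact (twin_adj h hyu hyv).mp ha
  have key' : ∀ y : V, G.Adj v y → G.Adj u (Equiv.swap u v y) := by
    intro y ha
    rcases eq_or_ne y u with rfl | hyu
    · rw [Equiv.swap_apply_left]; exact ha.symm
    rcases eq_or_ne y v with rfl | hyv
    · exact absurd ha (G.loopless.irrefl y)
    · rw [Equiv.swap_apply_of_ne_of_ne hyu hyv]
      exact (twin_adj h hyu hyv).mpr ha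
  intro x y ha
  rcases eq_or_ne x u with rfl | hxu
  · rw [Equiv.swap_apply_left]; exact key y ha
  rcases eq_or_ne x v with rfl | hxv
  · rw [Equiv.swap_apply_right]; exact key' y ha
  rcases eq_or_ne y u with rfl | hyu
  · rw [Equiv.swap_apply_left]; exact (key x ha.symm).symm
  rcases eq_or_ne y v with rfl | hyv
  · rw [Equiv.swap_apply_right]; exact (key' x ha.symm).symm
  · rw [Equiv.swap_apply_of_ne_of_ne hxu hxv, Equiv.swap_apply_of_ne_of_ne hyu hyv]
    exact ha

noncomputable def twinSwapHom {G : SimpleGraph V} {u v : V} (h : isTwinPair G u v) : G →g G :=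
  ⟨Equiv.swap u v, fun {x y} ha => swap_adj_mpr h x y ha⟩

lemma twinSwap_dist {G : SimpleGraph V} (hconn : G.Connected) {u v : V}
    (h : isTwinPair G u v) (x y : V) :
    G.dist (Equiv.swap u v x) (Equiv.swap u v y) = G.dist x y := by
  have le : ∀ a b : V, G.dist (Equiv.swap u v a) (Equiv.swap u v b) ≤ G.dist a b := by
    intro a b
    obtain ⟨p, hp⟩ := hconn.exists_walk_length_eq_dist a b
    have := SimpleGraph.dist_le (p.map (twinSwapHom h))
    rwa [SimpleGraph.Walk.length_map, hp] at this
  refine le_antisymm (le x y) ?_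
  have := le (Equiv.swap u v x) (Equiv.swap u v y)
  rwa [Equiv.swap_apply_self, Equiv.swap_apply_self] at this

lemma twin_dist {G : SimpleGraph V} (hconn : G.Connected) {u v : V}
    (h : isTwinPair G u v) {w : V} (hwu : w ≠ u) (hwv : w ≠ v) :
    G.dist u w = G.dist v w := by
  have := twinSwap_dist hconn h u w
  rw [Equiv.swap_apply_left, Equiv.swap_apply_of_ne_of_ne hwu hwv] at this
  exact this.symm

lemma isMetricGen_mono {G : SimpleGraph V} {X Y : Set V} (hXY : X ⊆ Y)
    (hX : isMetricGen G X) : isMetricGen G Y := by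
  intro x y hxy
  obtain ⟨w, hw, hr⟩ := hX x y hxy
  exact ⟨w, hXY hw, hr⟩

lemma isMetricGen_swap {G : SimpleGraph V} (hconn : G.Connected) {u v : V}
    (h : isTwinPair G u v) {X : Set V} (hX : isMetricGen G X) :
    isMetricGen G (Equiv.swap u v '' X) := by
  intro x y hxy
  obtain ⟨w, hw, hr⟩ := hX (Equiv.swap u v x) (Equiv.swap u v y)
    (fun he => hxy ((Equiv.swap u v).injective he))
  refine ⟨Equiv.swap u v w, Set.mem_image_of_mem _ hw, ?_⟩
  have e1 := twinSwap_dist hconn h x (Equiv.swap u v w)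
  have e2 := twinSwap_dist hconn h y (Equiv.swap u v w)
  rw [Equiv.swap_apply_self] at e1 e2
  rw [← e1, ← e2]
  exact hr

lemma isMetricGen_univ {G : SimpleGraph V} (hconn : G.Connected) :
    isMetricGen G Set.univ := by
  intro x y hxy
  refine ⟨x, Set.mem_univ x, ?_⟩
  rw [SimpleGraph.dist_self]
  exact fun he => hxy ((SimpleGraph.dist_eq_zero_iff_eq_or_not_reachable.mp he.symm).resolve_right
    (fun hr => hr (hconn y x))).symm

lemma resolver_twin {G : SimpleGraph V} (hconn : G.Connected) {u v : V}
    (h : isTwinPair G u v) {X' : Set V} (hgen : isMetricGen G X') :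
    u ∈ X' ∨ v ∈ X' := by
  obtain ⟨w, hw, hr⟩ := hgen u v h.1
  rcases eq_or_ne w u with rfl | h1
  · exact Or.inl hw
  rcases eq_or_ne w v with rfl | h2
  · exact Or.inr hw
  · exact absurd (twin_dist hconn h h1 h2) hr

lemma twins_mem_FT {G : SimpleGraph V} (hconn : G.Connected) {u v : V}
    (h : isTwinPair G u v) {F0 : Set V} (hFT : isFTMetricGen G F0) :
    u ∈ F0 ∧ v ∈ F0 := by
  constructor
  · by_contra hu
    have hv : v ∈ F0 := (resolver_twin hconn h hFT.1).resolve_left hu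
    rcases resolver_twin hconn h (hFT.2 v hv) with h1 | h2
    · exact hu h1.1
    · exact h2.2 rfl
  · by_contra hv
    have hu : u ∈ F0 := (resolver_twin hconn h hFT.1).resolve_right hv
    rcases resolver_twin hconn h (hFT.2 u hu) with h1 | h2
    · exact h1.2 rfl
    · exact hv h2.1

lemma ncard_sUnion_two [Fintype V] (parts : Finset (Set V)) :
    (↑parts : Set (Set V)).PairwiseDisjoint id → (∀ P ∈ parts, P.ncard = 2) →
    (⋃₀ (↑parts : Set (Set V))).ncard = 2 * parts.card := by
  classical
  induction parts using Finset.induction_on with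
  | empty => intro _ _; simp
  | @insert P s hPs ih =>
    intro hdisj hcard2
    rw [Finset.coe_insert, Set.sUnion_insert]
    have hdisjs : Disjoint P (⋃₀ (↑s : Set (Set V))) := by
      rw [Set.disjoint_sUnion_right]
      intro Q hQ
      exact hdisj (by simp) (by simp [hQ]) (by rintro rfl; exact hPs hQ)
    rw [Set.ncard_union_eq hdisjs,
      ih (hdisj.subset (by intro x hx; simp only [Finset.coe_insert, Set.mem_insert_iff]; exact Or.inr hx)) (fun Q hQ => hcard2 Q (Finset.mem_insert_of_mem hQ)),
      hcard2 P (Finset.mem_insert_self P s), Finset.card_insert_of_notMem hPs]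
    ring

/-- If the set of twin vertices of a connected graph `G` partitions
into `k` twin sets, all of cardinality `2`, and `dim(G) = k`, then `dim'(G) = 2k`. -/
theorem ftMetricDim_eq_two_mul_of_twinSets_card_two {V : Type*} [Fintype V]
    (G : SimpleGraph V) (hconn : G.Connected)
    (parts : Finset (Set V)) (k : ℕ) (hk : parts.card = k)
    (hsets : ∀ P ∈ parts, isTwinSet G P)
    (hdisj : (parts : Set (Set V)).PairwiseDisjoint id)
    (hcover : ⋃₀ (parts : Set (Set V)) = {u : V | isTwinVertex G u})
    (hcard2 : ∀ P ∈ parts, P.ncard = 2)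
    (hdim : metricDim G = k) :
    ftMetricDim G = 2 * k := by
  classical
  set F : Set V := ⋃₀ (parts : Set (Set V)) with hF
  -- each part is a twin pair
  have hpair : ∀ P ∈ parts, ∀ u ∈ P, ∀ v ∈ P, u ≠ v → isTwinPair G u v :=
    fun P hP => (hsets P hP).1
  have hFcard : F.ncard = 2 * k := by
    rw [hF, ncard_sUnion_two parts hdisj hcard2, hk]
  -- a minimum metric generator
  have hne : {n : ℕ | ∃ X : Set V, X.Finite ∧ isMetricGen G X ∧ X.ncard = n}.Nonempty :=
    ⟨(Set.univ : Set V).ncard, Set.univ, Set.toFinite _, isMetricGen_univ hconn, rfl⟩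
  obtain ⟨X, hXfin, hXgen, hXcard⟩ := Nat.sInf_mem hne
  rw [show sInf {n : ℕ | ∃ X : Set V, X.Finite ∧ isMetricGen G X ∧ X.ncard = n} = metricDim G
      from rfl, hdim] at hXcard
  -- X meets every part
  have hmeet : ∀ P : {P // P ∈ parts}, (X ∩ (P : Set V)).Nonempty := by
    rintro ⟨P, hP⟩
    obtain ⟨u, v, huv, rfl⟩ := Set.ncard_eq_two.mp (hcard2 P hP)
    have htw := hpair _ hP u (by simp) v (by simp) huv
    rcases resolver_twin hconn htw hXgen with h | h
    · exact ⟨u, h, by simp⟩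
    · exact ⟨v, h, by simp⟩
  set f : {P // P ∈ parts} → V := fun P => (hmeet P).some with hfdef
  have hfmem : ∀ P : {P // P ∈ parts}, f P ∈ X ∩ (P : Set V) := fun P => (hmeet P).some_mem
  have hfinj : Function.Injective f := by
    intro P Q hPQ
    by_contra hne'
    have hne2 : (P : Set V) ≠ (Q : Set V) := fun he => hne' (Subtype.ext he)
    have hd := hdisj P.2 Q.2 hne2
    exact Set.disjoint_left.mp hd (hfmem P).2 (hPQ ▸ (hfmem Q).2)
  set T : Finset V := parts.attach.image f with hTdef
  have hTcard : T.card = k := by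
    rw [hTdef, Finset.card_image_of_injective _ hfinj, Finset.card_attach, hk]
  have hTX : (↑T : Set V) ⊆ X := by
    intro a ha
    simp only [hTdef, Finset.coe_image, Set.mem_image, Finset.mem_coe, Finset.mem_attach,
      true_and] at ha
    obtain ⟨P, _, rfl⟩ := ha
    exact (hfmem P).1
  have hTXeq : (↑T : Set V) = X := by
    refine Set.eq_of_subset_of_ncard_le hTX ?_ hXfin
    rw [Set.ncard_coe_finset, hTcard, hXcard]
  -- membership description of X
  have hXdesc : ∀ a ∈ X, ∃ P : {P // P ∈ parts}, a = f P := by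
    intro a ha
    rw [← hTXeq] at ha
    simp only [hTdef, Finset.coe_image, Set.mem_image, Finset.mem_coe, Finset.mem_attach,
      true_and] at ha
    obtain ⟨P, _, rfl⟩ := ha
    exact ⟨P, rfl⟩
  have hXF : X ⊆ F := by
    intro a ha
    obtain ⟨P, rfl⟩ := hXdesc a ha
    exact Set.mem_sUnion.mpr ⟨P, P.2, (hfmem P).2⟩
  -- X ∩ P is a subsingleton for each part
  have hXPsub : ∀ P ∈ parts, ∀ a ∈ X ∩ P, ∀ b ∈ X ∩ P, a = b := by
    intro P hP a ha b hb
    obtain ⟨Q, rfl⟩ := hXdesc a ha.1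
    obtain ⟨R, rfl⟩ := hXdesc b hb.1
    have hQP : (Q : Set V) = P := by
      by_contra hne'
      exact Set.disjoint_left.mp (hdisj Q.2 hP hne') (hfmem Q).2 ha.2
    have hRP : (R : Set V) = P := by
      by_contra hne'
      exact Set.disjoint_left.mp (hdisj R.2 hP hne') (hfmem R).2 hb.2
    have : Q = R := Subtype.ext (hQP.trans hRP.symm)
    rw [this]
  -- F is a fault-tolerant metric generator
  have hFFT : isFTMetricGen G F := by
    constructor
    · exact isMetricGen_mono hXF hXgen
    · intro x hx
      obtain ⟨P, hP, hxP⟩ := Set.mem_sUnion.mp hx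
      have hP' : P ∈ parts := hP
      obtain ⟨u, v, huv, hPuv⟩ := Set.ncard_eq_two.mp (hcard2 P hP')
      have htw : isTwinPair G u v :=
        hpair P hP' u (by rw [hPuv]; simp) v (by rw [hPuv]; simp) huv
      by_cases hxX : x ∈ X
      · -- swap the twins
        have hxXP : x ∈ X ∩ P := ⟨hxX, hxP⟩
        refine isMetricGen_mono ?_ (isMetricGen_swap hconn htw hXgen)
        rintro b ⟨a, haX, rfl⟩
        constructor
        · -- swap a ∈ F
          by_cases haP : a ∈ P
          · have : Equiv.swap u v a ∈ P := by
              rw [hPuv] at haP ⊢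
              rcases haP with rfl | rfl
              · rw [Equiv.swap_apply_left]; simp
              · rw [Equiv.swap_apply_right]; simp
            exact Set.mem_sUnion.mpr ⟨P, hP, this⟩
          · have hau : a ≠ u := fun he => haP (by rw [he, hPuv]; simp)
            have hav : a ≠ v := fun he => haP (by rw [he, hPuv]; simp)
            rw [Equiv.swap_apply_of_ne_of_ne hau hav]
            exact hXF haX
        · -- swap a ≠ x
          simp only [Set.mem_singleton_iff]
          intro heq
          have hxuv : x = u ∨ x = v := by rw [hPuv] at hxP; simpa using hxP
          have haswap : a = Equiv.swap u v x := by
            rw [← heq, Equiv.swap_apply_self]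
          have haP : a ∈ P := by
            rw [haswap, hPuv]
            rcases hxuv with rfl | rfl
            · rw [Equiv.swap_apply_left]; simp
            · rw [Equiv.swap_apply_right]; simp
          have hax : a = x := hXPsub P hP' a ⟨haX, haP⟩ x ⟨hxX, hxP⟩
          rw [hax] at heq
          rcases hxuv with rfl | rfl
          · rw [Equiv.swap_apply_left] at heq; exact huv heq.symm
          · rw [Equiv.swap_apply_right] at heq; exact huv heq
      · -- X avoids x already
        refine isMetricGen_mono ?_ hXgen
        intro a haX
        exact ⟨hXF haX, by simp; rintro rfl; exact hxX haX⟩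
  -- conclude
  have hmem : 2 * k ∈ {n : ℕ | ∃ F : Set V, F.Finite ∧ isFTMetricGen G F ∧ F.ncard = n} :=
    ⟨F, Set.toFinite _, hFFT, hFcard⟩
  refine le_antisymm (Nat.sInf_le hmem) (le_csInf ⟨2 * k, hmem⟩ ?_)
  rintro n ⟨F0, hF0fin, hF0FT, rfl⟩
  have hsub : F ⊆ F0 := by
    intro x hx
    obtain ⟨P, hP, hxP⟩ := Set.mem_sUnion.mp hx
    obtain ⟨u, v, huv, hPuv⟩ := Set.ncard_eq_two.mp (hcard2 P hP)
    have htw : isTwinPair G u v :=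
      hpair P hP u (by rw [hPuv]; simp) v (by rw [hPuv]; simp) huv
    have hmem2 := twins_mem_FT hconn htw hF0FT
    rw [hPuv] at hxP
    rcases hxP with rfl | rfl
    · exact hmem2.1
    · exact hmem2.2
  calc 2 * k = F.ncard := hFcard.symm
    _ ≤ F0.ncard := Set.ncard_le_ncard hsub hF0fin
end

section
/- If G is a connected bipartite graph, then every metric generator of G is an edge metric generator of G. -/
open SimpleGraph

variable {V : Type*}

private lemma walk_parity {V : Type*} {G : SimpleGraph V} (c : G.Coloring (Fin 2))
    {w u : V} (p : G.Walk w u) : c w = c u ↔ Even p.length := by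
  induction p with
  | nil => simp
  | @cons w x u h p ih =>
    have hne : c w ≠ c x := c.valid h
    rw [SimpleGraph.Walk.length_cons, Nat.even_add_one, ← ih]
    revert hne
    generalize c w = a; generalize c x = b; generalize c u = d
    revert a b d; decide

private lemma dist_parity {V : Type*} {G : SimpleGraph V} (hconn : G.Connected)
    (c : G.Coloring (Fin 2)) (w u : V) : c w = c u ↔ Even (G.dist w u) := by
  obtain ⟨p, hp⟩ := hconn.exists_walk_length_eq_dist w u
  rw [← hp]; exact walk_parity c p

private lemma adj_dist_consec {V : Type*} {G : SimpleGraph V} (hconn : G.Connected)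
    (c : G.Coloring (Fin 2)) {a b : V} (hab : G.Adj a b) (w : V) :
    G.dist w b = G.dist w a + 1 ∨ G.dist w a = G.dist w b + 1 := by
  have h1 : G.dist w b ≤ G.dist w a + 1 := by
    have := hconn.dist_triangle (u := w) (v := a) (w := b)
    rwa [(SimpleGraph.dist_eq_one_iff_adj).2 hab] at this
  have h2 : G.dist w a ≤ G.dist w b + 1 := by
    have := hconn.dist_triangle (u := w) (v := b) (w := a)
    rwa [(SimpleGraph.dist_eq_one_iff_adj).2 hab.symm] at this
  have hpar : ¬ (Even (G.dist w a) ↔ Even (G.dist w b)) := by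
    rw [← dist_parity hconn c w a, ← dist_parity hconn c w b]
    intro h
    have hne : c a ≠ c b := c.valid hab
    revert hne h
    generalize c w = p; generalize c a = q; generalize c b = r
    revert p q r; decide
  rw [Nat.even_iff, Nat.even_iff] at hpar
  omega

/-- Key: if the two edges have endpoints of matching colors and the same
distance-to-edge from `w`, then the corresponding endpoint distances agree. -/
private lemma key_lemma {V : Type*} {G : SimpleGraph V} (hconn : G.Connected)
    (c : G.Coloring (Fin 2)) {a b x y : V} (hab : G.Adj a b) (hxy : G.Adj x y)
    (hc : c a = c x) (w : V)
    (hmin : min (G.dist w a) (G.dist w b) = min (G.dist w x) (G.dist w y)) :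
    G.dist w a = G.dist w x ∧ G.dist w b = G.dist w y := by
  have h1 := adj_dist_consec hconn c hab w
  have h2 := adj_dist_consec hconn c hxy w
  have hpar : Even (G.dist w a) ↔ Even (G.dist w x) := by
    rw [← dist_parity hconn c w a, ← dist_parity hconn c w x, hc]
  rw [Nat.even_iff, Nat.even_iff] at hpar
  omega

private lemma main_case {V : Type*} {G : SimpleGraph V} (hconn : G.Connected)
    (c : G.Coloring (Fin 2)) {a b x y : V} (hab : G.Adj a b) (hxy : G.Adj x y)
    (hc : c a = c x) (hef : s(a, b) ≠ s(x, y)) {X : Set V} (hX : isMetricGen G X)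
    (hcon : ∀ w ∈ X, min (G.dist w a) (G.dist w b) = min (G.dist w x) (G.dist w y)) :
    False := by
  by_cases hax : a = x
  · subst hax
    have hby : b ≠ y := fun h => hef (by rw [h])
    obtain ⟨u, hu, hne⟩ := hX b y hby
    have := (key_lemma hconn c hab hxy hc u (hcon u hu)).2
    rw [SimpleGraph.dist_comm (u := u) (v := b), SimpleGraph.dist_comm (u := u) (v := y)] at this
    exact hne this
  · obtain ⟨u, hu, hne⟩ := hX a x hax
    have := (key_lemma hconn c hab hxy hc u (hcon u hu)).1
    rw [SimpleGraph.dist_comm (u := u) (v := a), SimpleGraph.dist_comm (u := u) (v := x)] at this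
    exact hne this

/-- In a connected bipartite graph, every metric generator is an
edge metric generator. -/
theorem isEdgeMetricGen_of_isMetricGen_of_bipartite {V : Type*}
    (G : SimpleGraph V) (hconn : G.Connected) (hbip : G.Colorable 2)
    (X : Set V) (hX : isMetricGen G X) :
    isEdgeMetricGen G X := by
  intro e he f hf hef
  induction e using Sym2.ind with | _ a b => ?_
  induction f using Sym2.ind with | _ x y => ?_
  rw [SimpleGraph.mem_edgeSet] at he hf
  by_contra hcon
  push_neg at hcon
  obtain ⟨c⟩ := hbip
  have hcon' : ∀ w ∈ X, min (G.dist w a) (G.dist w b) = min (G.dist w x) (G.dist w y) :=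
    fun w hw => hcon w hw
  have hcx : c a = c x ∨ c a = c y := by
    have hne : c x ≠ c y := c.valid hf
    revert hne
    generalize c a = p; generalize c x = q; generalize c y = r
    revert p q r; decide
  rcases hcx with hc | hc
  · exact main_case hconn c he hf hc hef hX hcon'
  · refine main_case hconn c he hf.symm hc ?_ hX ?_
    · exact fun h => hef (h.trans (Sym2.eq_swap))
    · intro w hw
      rw [min_comm (G.dist w y)]
      exact hcon' w hw
end

section
/- Let S be an edge metric basis of a connected graph G and let u and v be twin vertices of G. If u ∈ S and v ∉ S, then (S \ {u}) ∪ {v} is also an edge metric basis of G. -/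
open SimpleGraph

variable {V : Type*}

section AuxSwap

variable {W : Type*} [DecidableEq W]

lemma twin_swap_adj (G : SimpleGraph W) {u v : W} (htwin : isTwinPair G u v) :
    ∀ x y, G.Adj (Equiv.swap u v x) (Equiv.swap u v y) ↔ G.Adj x y := by
  obtain ⟨hne, hN⟩ := htwin
  have key : ∀ w, w ≠ u → w ≠ v → (G.Adj u w ↔ G.Adj v w) := by
    intro w hwu hwv
    rcases hN with h | h
    · have := Set.ext_iff.mp h w
      simpa [SimpleGraph.mem_neighborSet] using this
    · have := Set.ext_iff.mp h w
      simp only [Set.mem_insert_iff, SimpleGraph.mem_neighborSet] at this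
      constructor
      · intro ha
        rcases this.mp (Or.inr ha) with h1 | h1
        · exact absurd h1 hwv
        · exact h1
      · intro ha
        rcases this.mpr (Or.inr ha) with h1 | h1
        · exact absurd h1 hwu
        · exact h1
  have main : ∀ x y, G.Adj x y → G.Adj (Equiv.swap u v x) (Equiv.swap u v y) := by
    intro x y hxy
    rcases eq_or_ne x u with hxu | hxu
    · rcases eq_or_ne y v with hyv | hyv
      · rw [hxu, hyv, Equiv.swap_apply_left, Equiv.swap_apply_right]
        exact (hxu ▸ hyv ▸ hxy).symm
      · have hyu : y ≠ u := fun h => hxy.ne' (h.trans hxu.symm)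
        rw [hxu, Equiv.swap_apply_left, Equiv.swap_apply_of_ne_of_ne hyu hyv]
        exact (key y hyu hyv).mp (hxu ▸ hxy)
    · rcases eq_or_ne x v with hxv | hxv
      · rcases eq_or_ne y u with hyu | hyu
        · rw [hxv, hyu, Equiv.swap_apply_right, Equiv.swap_apply_left]
          exact (hxv ▸ hyu ▸ hxy).symm
        · have hyv : y ≠ v := fun h => hxy.ne' (h.trans hxv.symm)
          rw [hxv, Equiv.swap_apply_right, Equiv.swap_apply_of_ne_of_ne hyu hyv]
          exact (key y hyu hyv).mpr (hxv ▸ hxy)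
      · rw [Equiv.swap_apply_of_ne_of_ne hxu hxv]
        rcases eq_or_ne y u with hyu | hyu
        · rw [hyu, Equiv.swap_apply_left]
          exact ((key x hxu hxv).mp (hyu ▸ hxy).symm).symm
        · rcases eq_or_ne y v with hyv | hyv
          · rw [hyv, Equiv.swap_apply_right]
            exact ((key x hxu hxv).mpr (hyv ▸ hxy).symm).symm
          · rw [Equiv.swap_apply_of_ne_of_ne hyu hyv]
            exact hxy
  intro x y
  constructor
  · intro h
    have := main _ _ h
    simpa [Equiv.swap_apply_self] using this
  · exact main x y

lemma twin_swap_dist (G : SimpleGraph W) (hconn : G.Connected) {u v : W}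
    (hadj : ∀ x y, G.Adj (Equiv.swap u v x) (Equiv.swap u v y) ↔ G.Adj x y) :
    ∀ x y, G.dist (Equiv.swap u v x) (Equiv.swap u v y) = G.dist x y := by
  set σ := Equiv.swap u v with hσ
  let f : G →g G := ⟨σ, fun {a b} h => (hadj a b).mpr h⟩
  have hle : ∀ x y, G.dist (σ x) (σ y) ≤ G.dist x y := by
    intro x y
    obtain ⟨p, hp⟩ := (hconn x y).exists_walk_length_eq_dist
    calc G.dist (σ x) (σ y) ≤ (p.map f).length := SimpleGraph.dist_le _
      _ = G.dist x y := by rw [SimpleGraph.Walk.length_map, hp]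
  intro x y
  refine le_antisymm (hle x y) ?_
  have := hle (σ x) (σ y)
  simpa [hσ, Equiv.swap_apply_self] using this

lemma twin_swap_edgeDist (G : SimpleGraph W) {u v : W}
    (hdist : ∀ x y, G.dist (Equiv.swap u v x) (Equiv.swap u v y) = G.dist x y) :
    ∀ (w : W) (e : Sym2 W),
      edgeDist G (Equiv.swap u v w) (Sym2.map (Equiv.swap u v) e) = edgeDist G w e := by
  intro w e
  induction e using Sym2.ind with
  | _ a b => simp [edgeDist, hdist]

lemma sym2_map_swap_involutive {u v : W} (e : Sym2 W) :
    Sym2.map (Equiv.swap u v) (Sym2.map (Equiv.swap u v) e) = e := by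
  induction e using Sym2.ind with
  | _ a b => simp [Equiv.swap_apply_self]

end AuxSwap

/-- If `S` is an edge metric basis of a connected graph `G`,
`u` and `v` are twins, `u ∈ S` and `v ∉ S`, then `(S \ {u}) ∪ {v}` is also an
edge metric basis of `G`. -/
theorem edgeMetricBasis_swap_twin {V : Type*} [Fintype V]
    (G : SimpleGraph V) (hconn : G.Connected)
    (S : Set V) (hS : isEdgeMetricBasis G S)
    (u v : V) (htwin : isTwinPair G u v) (hu : u ∈ S) (hv : v ∉ S) :
    isEdgeMetricBasis G ((S \ {u}) ∪ {v}) := by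
  classical
  set σ := Equiv.swap u v with hσ
  have hadj := twin_swap_adj G htwin
  have hdist := twin_swap_dist G hconn hadj
  have hed := twin_swap_edgeDist G hdist
  have hE : ∀ e : Sym2 V, e ∈ G.edgeSet → Sym2.map σ e ∈ G.edgeSet := by
    intro e he
    induction e using Sym2.ind with
    | _ a b =>
      rw [Sym2.map_pair_eq, SimpleGraph.mem_edgeSet] at *
      exact (hadj a b).mpr he
  have himg : σ '' S = (S \ {u}) ∪ {v} := by
    ext x
    have hiff : x ∈ σ '' S ↔ σ x ∈ S := by
      constructor
      · rintro ⟨y, hy, rfl⟩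
        simpa [hσ, Equiv.swap_apply_self] using hy
      · intro h
        exact ⟨σ x, h, by simp [hσ, Equiv.swap_apply_self]⟩
    rw [hiff]
    rcases eq_or_ne x u with rfl | hxu
    · simp [hσ, Equiv.swap_apply_left, hv, htwin.1]
    · rcases eq_or_ne x v with rfl | hxv
      · simp [hσ, Equiv.swap_apply_right, hu]
      · simp [hσ, Equiv.swap_apply_of_ne_of_ne hxu hxv, hxu, hxv]
  rw [← himg]
  constructor
  · intro e he f hf hef
    obtain ⟨w, hwS, hw⟩ := hS.1 (Sym2.map σ e) (hE e he) (Sym2.map σ f) (hE f hf)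
      (by
        intro h
        apply hef
        have := congrArg (Sym2.map σ) h
        rwa [sym2_map_swap_involutive, sym2_map_swap_involutive] at this)
    refine ⟨σ w, ⟨w, hwS, rfl⟩, ?_⟩
    have h1 : edgeDist G (σ w) e = edgeDist G w (Sym2.map σ e) := by
      conv_lhs => rw [← sym2_map_swap_involutive (u := u) (v := v) e]
      exact hed w (Sym2.map σ e)
    have h2 : edgeDist G (σ w) f = edgeDist G w (Sym2.map σ f) := by
      conv_lhs => rw [← sym2_map_swap_involutive (u := u) (v := v) f]
      exact hed w (Sym2.map σ f)
    rw [h1, h2]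
    exact hw
  · intro S' hS'
    rw [Set.ncard_image_of_injective S σ.injective]
    exact hS.2 S' hS'
end

section
/- There exists a connected graph G with dim'(G) > 2·dim(G), i.e., the fault-tolerant metric dimension can exceed twice the metric dimension. -/
open SimpleGraph

variable {V : Type*}

private def A : Fin 7 → Fin 7 → Bool :=
  ![![false,false,false,true,false,true,true],
    ![false,false,false,true,false,true,true],
    ![false,false,false,true,true,true,false],
    ![true,true,true,false,true,false,false],
    ![false,false,true,true,false,false,false],
    ![true,true,true,false,false,false,false],
    ![true,true,false,false,false,false,false]]

private lemma A_symm : ∀ x y : Fin 7, A x y = A y x := by decide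

private lemma A_irrefl : ∀ x : Fin 7, A x x = false := by decide

private def myG : SimpleGraph (Fin 7) where
  Adj x y := A x y = true
  symm := ⟨fun x y h => by
    show A y x = true
    rw [← A_symm x y]; exact h⟩
  loopless := ⟨fun x h => by
    have hx : A x x = true := h
    rw [A_irrefl x] at hx; exact Bool.false_ne_true hx⟩

private def D : Fin 7 → Fin 7 → ℕ :=
  ![![0,2,2,1,2,1,1],
    ![2,0,2,1,2,1,1],
    ![2,2,0,1,1,1,3],
    ![1,1,1,0,1,2,2],
    ![2,2,1,1,0,2,3],
    ![1,1,1,2,2,0,2],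
    ![1,1,3,2,3,2,0]]

private lemma cle : ∀ x y : Fin 7, D x y ≤ 3 := by decide

private lemma c0 : ∀ x y : Fin 7, D x y = 0 ↔ x = y := by decide

private lemma c1 : ∀ x y : Fin 7, D x y = 1 ↔ A x y = true := by decide

private lemma c2 : ∀ x y : Fin 7, D x y = 2 →
    x ≠ y ∧ A x y = false ∧ ∃ z, A x z = true ∧ A z y = true := by decide

private lemma c3 : ∀ x y : Fin 7, D x y = 3 →
    x ≠ y ∧ A x y = false ∧ (∀ z, ¬(A x z = true ∧ A z y = true)) ∧
      ∃ z w, A x z = true ∧ A z w = true ∧ A w y = true := by decide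

private lemma walk2 {W : Type*} {G : SimpleGraph W} {x y : W} (p : G.Walk x y)
    (h : p.length = 2) : ∃ z, G.Adj x z ∧ G.Adj z y := by
  cases p with
  | nil => simp at h
  | cons h1 q =>
    cases q with
    | nil => simp at h
    | cons h2 q' =>
      cases q' with
      | nil => exact ⟨_, h1, h2⟩
      | cons h3 q'' => simp [SimpleGraph.Walk.length_cons] at h

private lemma myReach (x y : Fin 7) : myG.Reachable x y := by
  have h := cle x y
  have h4 : D x y = 0 ∨ D x y = 1 ∨ D x y = 2 ∨ D x y = 3 := by omega
  rcases h4 with h | h | h | h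
  · rw [(c0 x y).mp h]
  · exact SimpleGraph.Adj.reachable ((c1 x y).mp h)
  · obtain ⟨-, -, z, h1, h2⟩ := c2 x y h
    exact (SimpleGraph.Adj.reachable (G := myG) h1).trans (SimpleGraph.Adj.reachable h2)
  · obtain ⟨-, -, -, z, w, h1, h2, h3⟩ := c3 x y h
    exact ((SimpleGraph.Adj.reachable (G := myG) h1).trans
      (SimpleGraph.Adj.reachable (G := myG) h2)).trans (SimpleGraph.Adj.reachable h3)

private lemma myDist (x y : Fin 7) : myG.dist x y = D x y := by
  have hr := myReach x y
  have h := cle x y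
  have h4 : D x y = 0 ∨ D x y = 1 ∨ D x y = 2 ∨ D x y = 3 := by omega
  rcases h4 with h | h | h | h
  · obtain rfl := (c0 x y).mp h
    rw [h]; exact SimpleGraph.dist_self
  · rw [h]; exact SimpleGraph.dist_eq_one_iff_adj.mpr ((c1 x y).mp h)
  · obtain ⟨hne, hna, z, h1, h2⟩ := c2 x y h
    rw [h]
    have hle : myG.dist x y ≤ 2 := by
      have := SimpleGraph.dist_le
        (SimpleGraph.Walk.cons (G := myG) h1 (SimpleGraph.Walk.cons h2 SimpleGraph.Walk.nil))
      exact this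
    have h0 : myG.dist x y ≠ 0 := fun e => hne (hr.dist_eq_zero_iff.mp e)
    have h1' : myG.dist x y ≠ 1 := by
      intro e
      have ha : A x y = true := SimpleGraph.dist_eq_one_iff_adj.mp e
      rw [hna] at ha; exact Bool.false_ne_true ha
    omega
  · obtain ⟨hne, hna, hnoc, z, w, h1, h2, h3⟩ := c3 x y h
    rw [h]
    have hle : myG.dist x y ≤ 3 := by
      have := SimpleGraph.dist_le (SimpleGraph.Walk.cons (G := myG) h1
        (SimpleGraph.Walk.cons h2 (SimpleGraph.Walk.cons h3 SimpleGraph.Walk.nil)))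
      exact this
    have h0 : myG.dist x y ≠ 0 := fun e => hne (hr.dist_eq_zero_iff.mp e)
    have h1' : myG.dist x y ≠ 1 := by
      intro e
      have ha : A x y = true := SimpleGraph.dist_eq_one_iff_adj.mp e
      rw [hna] at ha; exact Bool.false_ne_true ha
    have h2' : myG.dist x y ≠ 2 := by
      intro e
      obtain ⟨p, hp⟩ := hr.exists_walk_length_eq_dist
      rw [e] at hp
      obtain ⟨z', hz1, hz2⟩ := walk2 p hp
      exact hnoc z' ⟨hz1, hz2⟩
    omega

private lemma myConn : myG.Connected :=
  (SimpleGraph.connected_iff myG).mpr ⟨fun x y => myReach x y, ⟨0⟩⟩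

set_option maxRecDepth 100000 in
private lemma keySmall : ∀ Fs : Finset (Fin 7), Fs.card ≤ 4 →
    Fs = ∅ ∨ ∃ w ∈ Fs, ∃ x y : Fin 7, x ≠ y ∧ ∀ u ∈ Fs, u ≠ w → D x u = D y u := by
  decide

/-- There exists a connected graph `G` with `dim'(G) > 2 · dim(G)`. -/
theorem exists_ftMetricDim_gt_two_mul_metricDim :
    ∃ (V : Type) (G : SimpleGraph V), Finite V ∧ G.Connected ∧
      2 * metricDim G < ftMetricDim G := by
  refine ⟨Fin 7, myG, inferInstance, myConn, ?_⟩
  have hdim : metricDim myG ≤ 2 := by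
    apply Nat.sInf_le
    refine ⟨{0, 4}, Set.toFinite _, ?_, Set.ncard_pair (by decide)⟩
    intro x y hxy
    have key : ∀ x y : Fin 7, x ≠ y → D x 0 ≠ D y 0 ∨ D x 4 ≠ D y 4 := by decide
    rcases key x y hxy with h | h
    · exact ⟨0, Or.inl rfl, by rw [myDist, myDist]; exact h⟩
    · exact ⟨4, Or.inr rfl, by rw [myDist, myDist]; exact h⟩
  have hft : 5 ≤ ftMetricDim myG := by
    apply le_csInf
    · refine ⟨7, Set.univ, Set.finite_univ, ⟨?_, ?_⟩, by
        rw [Set.ncard_univ, Nat.card_eq_fintype_card, Fintype.card_fin]⟩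
      · intro x y hxy
        have key : ∀ x y : Fin 7, x ≠ y → ∃ u, D x u ≠ D y u := by decide
        obtain ⟨u, hu⟩ := key x y hxy
        exact ⟨u, trivial, by rw [myDist, myDist]; exact hu⟩
      · intro w _ x y hxy
        have key : ∀ w x y : Fin 7, x ≠ y → ∃ u, u ≠ w ∧ D x u ≠ D y u := by decide
        obtain ⟨u, hw, hu⟩ := key w x y hxy
        exact ⟨u, ⟨trivial, hw⟩, by rw [myDist, myDist]; exact hu⟩
    · rintro n ⟨F, hfin, ⟨hgen, hft2⟩, rfl⟩
      by_contra hcon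
      push_neg at hcon
      have hc : hfin.toFinset.card ≤ 4 := by
        rw [← Set.ncard_eq_toFinset_card F hfin]; omega
      rcases keySmall hfin.toFinset hc with h0 | ⟨w, hwF, x, y, hxy, hall⟩
      · have hFe : F = ∅ := by
          rw [← hfin.toFinset_eq_empty] at *; exact h0
        obtain ⟨u, hu, -⟩ := hgen 0 1 (by decide)
        rw [hFe] at hu
        exact hu
      · have hw : w ∈ F := hfin.mem_toFinset.mp hwF
        obtain ⟨u, hu, hd⟩ := hft2 w hw x y hxy
        refine hd ?_
        rw [myDist, myDist]
        exact hall u (hfin.mem_toFinset.mpr hu.1) hu.2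
  omega
end

section
/- For every integer r ≥ 1, the generalized Sierpiński graph S_{C_4}^r is isomorphic to a spanning subgraph of the hypercube Q_{2r} of dimension 2r; that is, there is a bijection from the vertex set of S_{C_4}^r (which has 4^r vertices) to the vertex set of Q_{2r} under which every edge of S_{C_4}^r maps to an edge of Q_{2r}. -/
open SimpleGraph

variable {V : Type*}

namespace SC4Aux

/-- Gray code on `Fin 4`. -/
def gray : Fin 4 → Fin 2 × Fin 2 := ![(0,0),(0,1),(1,1),(1,0)]

/-- The digit string padded by `0` (whose Gray code is `0`). -/
def xpad (r : ℕ) (x : Fin r → Fin 4) (k : ℕ) : Fin 2 × Fin 2 :=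
  if h : k < r then gray (x ⟨k, h⟩) else (0, 0)

/-- Gray-code derivative at position `k`. -/
def derN (r : ℕ) (x : Fin r → Fin 4) (k : ℕ) : Fin 2 × Fin 2 :=
  xpad r x k + xpad r x (k + 1)

/-- The embedding into binary strings of length `2r`. -/
def emb (r : ℕ) (x : Fin r → Fin 4) (j : Fin (2 * r)) : Fin 2 :=
  if j.1 % 2 = 0 then (derN r x (j.1 / 2)).1 else (derN r x (j.1 / 2)).2

lemma gray_inj : ∀ a b : Fin 4, gray a = gray b → a = b := by decide
lemma add_right_cancel' : ∀ a b c : Fin 2 × Fin 2, a + c = b + c → a = b := by decide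
lemma self_add : ∀ v w : Fin 2 × Fin 2, v + v = w + w := by decide
lemma add_ne2 : ∀ u v w : Fin 2, u ≠ v → u + w ≠ v + w := by decide
lemma add_eq2 : ∀ u v w : Fin 2, u = v → u + w = v + w := by decide

lemma c4_gray : ∀ a b : Fin 4, a ≠ b → (b = a + 1 ∨ a = b + 1) →
    ((gray a).1 ≠ (gray b).1 ∧ (gray a).2 = (gray b).2) ∨
    ((gray a).1 = (gray b).1 ∧ (gray a).2 ≠ (gray b).2) := by decide

lemma emb_even {r : ℕ} (x : Fin r → Fin 4) (j : Fin (2 * r)) (hj : j.1 % 2 = 0) :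
    emb r x j = (derN r x (j.1 / 2)).1 := by
  simp only [emb, if_pos hj]

lemma emb_odd {r : ℕ} (x : Fin r → Fin 4) (j : Fin (2 * r)) (hj : ¬ j.1 % 2 = 0) :
    emb r x j = (derN r x (j.1 / 2)).2 := by
  simp only [emb, if_neg hj]

lemma emb_two_mul {r : ℕ} (x : Fin r → Fin 4) (k : ℕ) (h : 2 * k < 2 * r) :
    emb r x ⟨2 * k, h⟩ = (derN r x k).1 := by
  have hd : (⟨2 * k, h⟩ : Fin (2 * r)).1 / 2 = k :=
    Nat.mul_div_cancel_left k (by norm_num)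
  rw [emb_even x _ (Nat.mul_mod_right 2 k), hd]

lemma emb_two_mul_add_one {r : ℕ} (x : Fin r → Fin 4) (k : ℕ) (h : 2 * k + 1 < 2 * r) :
    emb r x ⟨2 * k + 1, h⟩ = (derN r x k).2 := by
  have hm : ¬ (⟨2 * k + 1, h⟩ : Fin (2 * r)).1 % 2 = 0 := by
    show ¬ (2 * k + 1) % 2 = 0; omega
  have hd : (⟨2 * k + 1, h⟩ : Fin (2 * r)).1 / 2 = k := by
    show (2 * k + 1) / 2 = k; omega
  rw [emb_odd x _ hm, hd]

lemma derN_eq_of_emb_eq {r : ℕ} {x y : Fin r → Fin 4}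
    (h : ∀ j, emb r x j = emb r y j) : ∀ k, derN r x k = derN r y k := by
  intro k
  by_cases hk : k < r
  · have h1 := h ⟨2 * k, by omega⟩
    have h2 := h ⟨2 * k + 1, by omega⟩
    rw [emb_two_mul x k, emb_two_mul y k] at h1
    rw [emb_two_mul_add_one x k, emb_two_mul_add_one y k] at h2
    exact Prod.ext h1 h2
  · simp only [derN, xpad, dif_neg (show ¬ k < r by omega),
      dif_neg (show ¬ k + 1 < r by omega)]

lemma xpad_eq_of_derN_eq {r : ℕ} {x y : Fin r → Fin 4}
    (hd : ∀ k, derN r x k = derN r y k) : ∀ k, xpad r x k = xpad r y k := by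
  have H : ∀ m k, r ≤ k + m → xpad r x k = xpad r y k := by
    intro m
    induction m with
    | zero =>
      intro k hk
      simp only [xpad, dif_neg (show ¬ k < r by omega)]
    | succ m ih =>
      intro k hk
      by_cases h : r ≤ k
      · simp only [xpad, dif_neg (show ¬ k < r by omega)]
      · have h1 := hd k
        have h2 := ih (k + 1) (by omega)
        simp only [derN] at h1
        rw [h2] at h1
        exact add_right_cancel' _ _ _ h1
  intro k; exact H r k (by omega)

lemma emb_inj {r : ℕ} : Function.Injective (emb r) := by
  intro x y h
  have hd := derN_eq_of_emb_eq (fun j => congrFun h j)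
  have hx := xpad_eq_of_derN_eq hd
  funext i
  have hi := hx i.1
  simp only [xpad] at hi
  rw [dif_pos i.2, dif_pos i.2] at hi
  exact gray_inj _ _ hi

lemma emb_bij {r : ℕ} : Function.Bijective (emb r) := by
  refine (Fintype.bijective_iff_injective_and_card _).mpr ⟨emb_inj, ?_⟩
  simp only [Fintype.card_fun, Fintype.card_fin]
  rw [pow_mul]; norm_num

end SC4Aux

/-- For every `r ≥ 1`, `S_{C_4}^r` (which has `4^r` vertices) is
isomorphic to a spanning subgraph of the hypercube `Q_{2r}`: there is a bijection
of vertex sets mapping every edge of `S_{C_4}^r` to an edge of `Q_{2r}`. -/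
theorem sierpinski_C4_spanning_subgraph_hypercube (r : ℕ) (hr : 1 ≤ r) :
    Fintype.card (Fin r → Fin 4) = 4 ^ r ∧
    ∃ f : (Fin r → Fin 4) ≃ (Fin (2 * r) → Fin 2),
      ∀ x y : Fin r → Fin 4, (sierpinski C4 r).Adj x y →
        (hypercube (2 * r)).Adj (f x) (f y) := by
  classical
  open SC4Aux in
  refine ⟨by simp, ⟨Equiv.ofBijective (emb r) emb_bij, ?_⟩⟩
  intro x y hxy
  obtain ⟨t, h1, ⟨hne, hadj⟩, h3⟩ := (id hxy : sierpinskiAdj C4 r x y)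
  rw [C4, SimpleGraph.fromRel_adj] at hadj
  -- x and y agree strictly above t and out of range
  have Ex : ∀ k : ℕ, t.1 < k → xpad r x k = xpad r y k := by
    intro k hk
    by_cases h : k < r
    · simp only [xpad]; rw [dif_pos h, dif_pos h]
      exact congrArg gray (h1 ⟨k, h⟩ hk)
    · simp only [xpad, dif_neg h]
  have hxt : xpad r x t.1 = gray (x t) := by
    simp only [xpad]; rw [dif_pos t.2]
  have hyt : xpad r y t.1 = gray (y t) := by
    simp only [xpad]; rw [dif_pos t.2]
  have hlow : ∀ k : ℕ, k < t.1 → xpad r x k = gray (y t) ∧ xpad r y k = gray (x t) := by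
    intro k hk
    have hkr : k < r := lt_trans hk t.2
    have h3' := h3 ⟨k, hkr⟩ hk
    constructor
    · simp only [xpad]; rw [dif_pos hkr]; exact congrArg gray h3'.1
    · simp only [xpad]; rw [dif_pos hkr]; exact congrArg gray h3'.2
  -- derivatives agree away from t
  have FC1 : ∀ k : ℕ, k ≠ t.1 → derN r x k = derN r y k := by
    intro k hk
    rcases lt_or_gt_of_ne hk with hlt | hgt
    · -- k < t
      rcases Nat.lt_or_ge (k + 1) t.1 with hk1 | hk1
      · simp only [derN, (hlow k hlt).1, (hlow k hlt).2,
          (hlow (k+1) hk1).1, (hlow (k+1) hk1).2]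
        exact self_add _ _
      · have hk1' : k + 1 = t.1 := by omega
        simp only [derN, (hlow k hlt).1, (hlow k hlt).2, hk1', hxt, hyt]
        exact add_comm _ _
    · -- t < k
      simp only [derN, Ex k hgt, Ex (k+1) (by omega)]
  -- derivative at t
  have hc : xpad r x (t.1 + 1) = xpad r y (t.1 + 1) := Ex (t.1 + 1) (by omega)
  have FDx : derN r x t.1 = gray (x t) + xpad r x (t.1 + 1) := by
    simp only [derN, hxt]
  have FDy : derN r y t.1 = gray (y t) + xpad r x (t.1 + 1) := by
    simp only [derN, hyt, hc]
  show ∃! j : Fin (2 * r), emb r x j ≠ emb r y j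
  rcases c4_gray (x t) (y t) hne hadj.2 with ⟨hd1, he2⟩ | ⟨he1, hd2⟩
  · -- first Gray component differs: witness j = 2t
    have hj : 2 * t.1 < 2 * r := by have := t.2; omega
    refine ⟨⟨2 * t.1, hj⟩, ?_, ?_⟩
    · show emb r x ⟨2 * t.1, hj⟩ ≠ emb r y ⟨2 * t.1, hj⟩
      rw [emb_two_mul x t.1, emb_two_mul y t.1, FDx, FDy]
      exact add_ne2 _ _ _ hd1
    · intro j' hj'
      by_cases hk : j'.1 / 2 = t.1
      · by_cases hm : j'.1 % 2 = 0
        · exact Fin.ext (show j'.1 = 2 * t.1 by omega)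
        · exfalso
          rw [emb_odd x _ hm, emb_odd y _ hm, hk, FDx, FDy] at hj'
          exact hj' (add_eq2 _ _ _ he2)
      · exfalso
        have hD := FC1 (j'.1 / 2) hk
        by_cases hm : j'.1 % 2 = 0
        · rw [emb_even x _ hm, emb_even y _ hm, hD] at hj'
          exact hj' rfl
        · rw [emb_odd x _ hm, emb_odd y _ hm, hD] at hj'
          exact hj' rfl
  · -- second Gray component differs: witness j = 2t+1
    have hj : 2 * t.1 + 1 < 2 * r := by have := t.2; omega
    refine ⟨⟨2 * t.1 + 1, hj⟩, ?_, ?_⟩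
    · show emb r x ⟨2 * t.1 + 1, hj⟩ ≠ emb r y ⟨2 * t.1 + 1, hj⟩
      rw [emb_two_mul_add_one x t.1, emb_two_mul_add_one y t.1, FDx, FDy]
      exact add_ne2 _ _ _ hd2
    · intro j' hj'
      by_cases hk : j'.1 / 2 = t.1
      · by_cases hm : j'.1 % 2 = 0
        · exfalso
          rw [emb_even x _ hm, emb_even y _ hm, hk, FDx, FDy] at hj'
          exact hj' (add_eq2 _ _ _ he1)
        · exact Fin.ext (show j'.1 = 2 * t.1 + 1 by omega)
      · exfalso
        have hD := FC1 (j'.1 / 2) hk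
        by_cases hm : j'.1 % 2 = 0
        · rw [emb_even x _ hm, emb_even y _ hm, hD] at hj'
          exact hj' rfl
        · rw [emb_odd x _ hm, emb_odd y _ hm, hD] at hj'
          exact hj' rfl
end
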